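/- Let (Ω, 𝓕, μ) be a probability space, T : Ω → Bool measurable, and Y0, Y1 : Ω → ℝ integrable. Suppose T is independent of the pair ω ↦ (Y0 ω, Y1 ω) under μ, and 0 < μ({ω | T ω = true}) < 1. Define the observed outcome Y ω = if T ω then Y1 ω else Y0 ω. Then the difference of arm means identifies the average treatment effect: ∫ Y d(ProbabilityTheory.cond μ {T = true}) − ∫ Y d(ProbabilityTheory.cond μ {T = false}) = ∫ (Y1 − Y0) dμ. -/

import Mathlib

open MeasureTheory ProbabilityTheory

lemma indep_setIntegral {Ω : Type*} [MeasurableSpace Ω]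
    (μ : Measure Ω) [IsProbabilityMeasure μ]
    (T : Ω → Bool) (f : Ω → ℝ) (hT : Measurable T) (hf : Integrable f μ)
    (hindep : IndepFun T f μ) (b : Bool) :
    ∫ ω in {ω | T ω = b}, f ω ∂μ = (μ {ω | T ω = b}).toReal * ∫ ω, f ω ∂μ := by
  set A : Set Ω := {ω | T ω = b} with hA
  have hAm : MeasurableSet A := hT (measurableSet_singleton b)
  set X : Ω → ℝ := fun ω => if T ω = b then 1 else 0 with hX
  have hXm : Measurable X := by
    have : X = (fun b' : Bool => if b' = b then (1:ℝ) else 0) ∘ T := rfl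
    rw [this]
    exact (measurable_from_top).comp hT
  have hXf : IndepFun X f μ :=
    hindep.comp (measurable_from_top (f := fun b' : Bool => if b' = b then (1:ℝ) else 0))
      measurable_id
  have h1 : ∫ ω in A, f ω ∂μ = ∫ ω, (X * f) ω ∂μ := by
    rw [← integral_indicator hAm]
    congr 1
    funext ω
    by_cases h : T ω = b <;> simp [Set.indicator, hA, hX, h]
  have h2 : ∫ ω, X ω ∂μ = (μ A).toReal := by
    have : X = A.indicator (fun _ => (1:ℝ)) := by
      funext ω; by_cases h : T ω = b <;> simp [Set.indicator, hA, hX, h]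
    rw [this, integral_indicator_const _ hAm]
    simp
    rfl
  rw [h1, hXf.integral_mul_eq_mul_integral hXm.aestronglyMeasurable hf.1, h2]

theorem rct_difference_in_means_identifies_ate {Ω : Type*} [MeasurableSpace Ω]
    (μ : Measure Ω) [IsProbabilityMeasure μ]
    (T : Ω → Bool) (Y0 Y1 : Ω → ℝ)
    (hT : Measurable T) (hY0 : Integrable Y0 μ) (hY1 : Integrable Y1 μ)
    (hindep : IndepFun T (fun ω => (Y0 ω, Y1 ω)) μ)
    (hpos : 0 < μ {ω | T ω = true}) (hlt : μ {ω | T ω = true} < 1) :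
    (∫ ω, (if T ω then Y1 ω else Y0 ω) ∂(ProbabilityTheory.cond μ {ω | T ω = true}))
      - (∫ ω, (if T ω then Y1 ω else Y0 ω) ∂(ProbabilityTheory.cond μ {ω | T ω = false}))
      = ∫ ω, (Y1 ω - Y0 ω) ∂μ := by
  have hAm : MeasurableSet {ω | T ω = true} := hT (measurableSet_singleton true)
  have hBm : MeasurableSet {ω | T ω = false} := hT (measurableSet_singleton false)
  have hindep1 : IndepFun T Y1 μ :=
    hindep.comp measurable_id measurable_snd
  have hindep0 : IndepFun T Y0 μ :=
    hindep.comp measurable_id measurable_fst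
  -- measures
  have hAne : μ {ω | T ω = true} ≠ 0 := hpos.ne'
  have hAfin : μ {ω | T ω = true} ≠ ⊤ := (measure_lt_top μ _).ne
  have hBc : {ω | T ω = false} = {ω | T ω = true}ᶜ := by
    ext ω; simp
  have hBval : μ {ω | T ω = false} = 1 - μ {ω | T ω = true} := by
    rw [hBc, measure_compl hAm hAfin, measure_univ]
  have hBne : μ {ω | T ω = false} ≠ 0 := by
    rw [hBval]
    exact (tsub_pos_of_lt hlt).ne'
  have hBfin : μ {ω | T ω = false} ≠ ⊤ := (measure_lt_top μ _).ne
  -- set integrals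
  have hsetA : ∫ ω in {ω | T ω = true}, (if T ω then Y1 ω else Y0 ω) ∂μ
      = (μ {ω | T ω = true}).toReal * ∫ ω, Y1 ω ∂μ := by
    have heq : ∫ ω in {ω | T ω = true}, (if T ω then Y1 ω else Y0 ω) ∂μ
        = ∫ ω in {ω | T ω = true}, Y1 ω ∂μ :=
      setIntegral_congr_fun hAm (fun ω hω => by simp [Set.mem_setOf_eq.mp hω])
    rw [heq]
    exact indep_setIntegral μ T Y1 hT hY1 hindep1 true
  have hsetB : ∫ ω in {ω | T ω = false}, (if T ω then Y1 ω else Y0 ω) ∂μ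
      = (μ {ω | T ω = false}).toReal * ∫ ω, Y0 ω ∂μ := by
    have heq : ∫ ω in {ω | T ω = false}, (if T ω then Y1 ω else Y0 ω) ∂μ
        = ∫ ω in {ω | T ω = false}, Y0 ω ∂μ :=
      setIntegral_congr_fun hBm (fun ω hω => by simp [Set.mem_setOf_eq.mp hω])
    rw [heq]
    exact indep_setIntegral μ T Y0 hT hY0 hindep0 false
  have hcondA : ∫ ω, (if T ω then Y1 ω else Y0 ω) ∂(ProbabilityTheory.cond μ {ω | T ω = true})
      = ∫ ω, Y1 ω ∂μ := by
    rw [ProbabilityTheory.cond, integral_smul_measure, hsetA, ENNReal.toReal_inv, smul_eq_mul,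
      ← mul_assoc, inv_mul_cancel₀ (ENNReal.toReal_ne_zero.mpr ⟨hAne, hAfin⟩), one_mul]
  have hcondB : ∫ ω, (if T ω then Y1 ω else Y0 ω) ∂(ProbabilityTheory.cond μ {ω | T ω = false})
      = ∫ ω, Y0 ω ∂μ := by
    rw [ProbabilityTheory.cond, integral_smul_measure, hsetB, ENNReal.toReal_inv, smul_eq_mul,
      ← mul_assoc, inv_mul_cancel₀ (ENNReal.toReal_ne_zero.mpr ⟨hBne, hBfin⟩), one_mul]
  rw [hcondA, hcondB, integral_sub hY1 hY0]
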